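/- For all c ∈ [0,1] and h ∈ [0, min(c, 1−c)], we have 1 − √(c² − h²) − √((1−c)² − h²) ≤ 2h²/min(c, 1−c). -/
import Mathlib

lemma aux_sqrt_lb (a h : ℝ) (ha : 0 < a) (hh0 : 0 ≤ h) (hha : h ≤ a) :
    a - Real.sqrt (a ^ 2 - h ^ 2) ≤ h ^ 2 / a := by
  have hnn : 0 ≤ a ^ 2 - h ^ 2 := by nlinarith
  have hs0 : 0 ≤ Real.sqrt (a ^ 2 - h ^ 2) := Real.sqrt_nonneg _
  have hsq : (Real.sqrt (a ^ 2 - h ^ 2)) ^ 2 = a ^ 2 - h ^ 2 := Real.sq_sqrt hnn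
  have hsa : Real.sqrt (a ^ 2 - h ^ 2) ≤ a := by nlinarith
  rw [sub_le_iff_le_add, ← sub_le_iff_le_add']
  rw [sub_le_iff_le_add, ← sub_le_iff_le_add'] at *
  nlinarith [div_nonneg (sq_nonneg h) ha.le, mul_div_cancel₀ (h ^ 2) ha.ne']

theorem one_sub_sqrt_sub_sqrt_le
    (c h : ℝ) (hc0 : 0 ≤ c) (hc1 : c ≤ 1)
    (hh0 : 0 ≤ h) (hh : h ≤ min c (1 - c)) :
    1 - Real.sqrt (c ^ 2 - h ^ 2) - Real.sqrt ((1 - c) ^ 2 - h ^ 2)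
      ≤ 2 * h ^ 2 / min c (1 - c) := by
  have hhc : h ≤ c := hh.trans (min_le_left _ _)
  have hhc' : h ≤ 1 - c := hh.trans (min_le_right _ _)
  set m := min c (1 - c) with hm
  have hm0 : 0 ≤ m := le_min hc0 (by linarith)
  rcases eq_or_lt_of_le hm0 with h0 | hpos
  · have hh' : h = 0 := le_antisymm (h0 ▸ hh) hh0
    subst hh'
    rw [show c ^ 2 - 0 ^ 2 = c ^ 2 by ring, show (1 - c) ^ 2 - 0 ^ 2 = (1 - c) ^ 2 by ring,
      Real.sqrt_sq hc0, Real.sqrt_sq (by linarith : (0:ℝ) ≤ 1 - c)]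
    have : (2 : ℝ) * 0 ^ 2 / m = 0 := by simp
    rw [this]; linarith
  · have hcm : m ≤ c := min_le_left _ _
    have hcm' : m ≤ 1 - c := min_le_right _ _
    have hc : 0 < c := lt_of_lt_of_le hpos hcm
    have hc' : 0 < 1 - c := lt_of_lt_of_le hpos hcm'
    have h1 := aux_sqrt_lb c h hc hh0 hhc
    have h2 := aux_sqrt_lb (1 - c) h hc' hh0 hhc'
    have e1 : h ^ 2 / c ≤ h ^ 2 / m :=
      div_le_div_of_nonneg_left (by positivity) hpos hcm
    have e2 : h ^ 2 / (1 - c) ≤ h ^ 2 / m :=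
      div_le_div_of_nonneg_left (by positivity) hpos hcm'
    have : 2 * h ^ 2 / m = h ^ 2 / m + h ^ 2 / m := by ring
    linarith
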